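/- Let K : ℝ → ℝ be defined by K(x) = 2cos(x)/(π² − 4x²) for x ≠ ±π/2, with K(±π/2) = 1/(2π). Then on the open interval (0, π/2) one has K'(x) < 0 and K''(x) < 0; in particular both K and the logarithmic derivative K'/K are decreasing on (0, π/2). -/

import Mathlib

open MeasureTheory Filter

/-- The extremal kernel `K(x) = 2cos(x)/(π² − 4x²)`, extended continuously by
the value `1/(2π)` at its removable singularities `x = ±π/2`. -/
noncomputable def Kker (x : ℝ) : ℝ :=
  if x = Real.pi / 2 ∨ x = -(Real.pi / 2) then 1 / (2 * Real.pi)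
  else 2 * Real.cos x / (Real.pi ^ 2 - 4 * x ^ 2)

namespace KernelAux

open Real Set

/-! ### Taylor-type bounds for sin and cos -/

lemma my_sin_lower {x : ℝ} (hx : 0 ≤ x) : x - x^3/6 ≤ Real.sin x := by
  have mono : MonotoneOn (fun y => Real.sin y - (y - y^3/6)) (Ici 0) := by
    apply monotoneOn_of_deriv_nonneg (convex_Ici 0)
    · fun_prop
    · intro y hy
      apply DifferentiableAt.differentiableWithinAt
      fun_prop
    · intro y hy
      have hd : HasDerivAt (fun y : ℝ => Real.sin y - (y - y^3/6))
          (Real.cos y - (1 - 3*y^2/6)) y := by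
        refine ((Real.hasDerivAt_sin y).sub ((hasDerivAt_id y).sub ((hasDerivAt_pow 3 y).div_const 6))).congr_deriv ?_
        all_goals (push_cast; ring)
      rw [hd.deriv]
      nlinarith [Real.one_sub_sq_div_two_le_cos (x := y)]
  have h0 := mono (self_mem_Ici) (mem_Ici.2 hx) hx
  simpa using h0

lemma my_cos_upper {x : ℝ} : Real.cos x ≤ 1 - x^2/2 + x^4/24 := by
  wlog hx : 0 ≤ x with H
  · have := H (x := -x) (by linarith)
    rw [show ((-x:ℝ))^4 = x^4 by ring, Real.cos_neg, show ((-x:ℝ))^2 = x^2 by ring] at this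
    exact this
  have mono : MonotoneOn (fun y => (1 - y^2/2 + y^4/24) - Real.cos y) (Ici 0) := by
    apply monotoneOn_of_deriv_nonneg (convex_Ici 0)
    · fun_prop
    · intro y hy; apply DifferentiableAt.differentiableWithinAt; fun_prop
    · intro y hy
      have hd : HasDerivAt (fun y : ℝ => (1 - y^2/2 + y^4/24) - Real.cos y)
          ((0 - 2*y/2 + 4*y^3/24) - (-Real.sin y)) y := by
        refine ((((hasDerivAt_const y (1:ℝ)).sub ((hasDerivAt_pow 2 y).div_const 2)).add
          ((hasDerivAt_pow 4 y).div_const 24)).sub (Real.hasDerivAt_cos y)).congr_deriv ?_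
        all_goals (push_cast; ring)
      rw [hd.deriv]
      have hsy : 0 ≤ y := interior_subset hy
      nlinarith [my_sin_lower hsy]
  have h0 := mono (self_mem_Ici) (mem_Ici.2 hx) hx
  simp at h0
  nlinarith [h0]

lemma my_sin_upper {x : ℝ} (hx : 0 ≤ x) : Real.sin x ≤ x - x^3/6 + x^5/120 := by
  have mono : MonotoneOn (fun y => (y - y^3/6 + y^5/120) - Real.sin y) (Ici 0) := by
    apply monotoneOn_of_deriv_nonneg (convex_Ici 0)
    · fun_prop
    · intro y hy; apply DifferentiableAt.differentiableWithinAt; fun_prop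
    · intro y hy
      have hd : HasDerivAt (fun y : ℝ => (y - y^3/6 + y^5/120) - Real.sin y)
          ((1 - 3*y^2/6 + 5*y^4/120) - Real.cos y) y := by
        refine ((((hasDerivAt_id y).sub ((hasDerivAt_pow 3 y).div_const 6)).add
          ((hasDerivAt_pow 5 y).div_const 120)).sub (Real.hasDerivAt_sin y)).congr_deriv ?_
        all_goals (push_cast; ring)
      rw [hd.deriv]
      nlinarith [my_cos_upper (x := y)]
  have h0 := mono (self_mem_Ici) (mem_Ici.2 hx) hx
  simp at h0
  nlinarith [h0]

/-! ### Polynomial certificate lemmas -/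

lemma polyA1 {p x : ℝ} (hp1 : 3.141592 ≤ p) (hx0 : 0 < x) (hx : x ≤ 0.95) :
    8*x*(1 - x^2/2 + x^4/24) < (x - x^3/6)*(p^2 - 4*x^2) := by
  have hq1 : (9.8696 : ℝ) ≤ p^2 := by nlinarith [sq_nonneg (p - 3.141592)]
  have h6 : (0:ℝ) ≤ 1 - x^2/6 := by nlinarith
  have hS : 0 < p^2 - 8 - x^2*p^2/6 + x^4/3 := by
    nlinarith [mul_nonneg (sub_nonneg.2 hq1) h6, sq_nonneg (x*x)]
  nlinarith [mul_pos hx0 hS]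

lemma polyA2 {p t : ℝ} (hp1 : 3.141592 ≤ p) (hp2 : p ≤ 3.141593) (ht0 : 0 < t) (ht : t ≤ 0.6716) :
    (p - 2*t)*(1 - t^2/6 + t^4/120) < (1 - t^2/2)*(p - t) := by
  have hR : 0 < 1 - t*p/3 + t^2/6 - t^3*p/120 + t^4/60 := by
    nlinarith [sq_nonneg t, mul_pos ht0 ht0, mul_pos (mul_pos ht0 ht0) ht0]
  nlinarith [mul_pos ht0 hR]

lemma polycoef {p t : ℝ} (hp1 : 3.141592 ≤ p) (hp2 : p ≤ 3.141593) (ht0 : 0 < t) (ht : t ≤ 0.6716) :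
    32*t^2*(p-t)^2 - 64*t*(p-t) - 64*(p-2*t)^2 < 0 := by
  have h1 : t*(p-t) ≤ 2.111 := by nlinarith
  have h2 : (1.798 : ℝ) ≤ p-2*t := by linarith
  have h3 : 0 ≤ t*(p-t) := by nlinarith
  nlinarith [sq_nonneg (t*(p-t)), mul_nonneg h3 h3, sq_nonneg (p-2*t)]

lemma polyB2 {p t : ℝ} (hp1 : 3.141592 ≤ p) (hp2 : p ≤ 3.141593) (ht0 : 0 < t) (ht : t ≤ 0.6716) :
    0 < (t - t^3/6 + t^5/120)*(32*t^2*(p-t)^2 - 64*t*(p-t) - 64*(p-2*t)^2)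
        + 64*t*(p-2*t)*(p-t)*(1-t^2/2) := by
  have hq1 : (9.8696 : ℝ) ≤ p^2 := by nlinarith [sq_nonneg (p - 3.141592)]
  have hq2 : p^2 ≤ (9.8696066 : ℝ) := by nlinarith [sq_nonneg (p - 3.141593)]
  have ht2 : t^2 ≤ 0.6716*t := by nlinarith
  have hH : 0 < -64 + 32/3*p^2 - 88/15*t^2*p^2 + 184/15*t^3*p - 104/15*t^4
      + 4/15*t^4*p^2 - 8/15*t^5*p + 4/15*t^6 := by
    have h1 : t^2*p^2 ≤ 9.8696066*(0.6716*t) := by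
      nlinarith [mul_nonneg (sq_nonneg t) (sub_nonneg.2 hq1), sq_nonneg t]
    have h2 : 0 ≤ t^3*p := by positivity
    have h3 : t^5*p ≤ 3.141593*(0.6716^4*t) := by
      nlinarith [mul_pos (mul_pos (mul_pos ht0 ht0) (mul_pos ht0 ht0)) ht0,
        mul_nonneg (mul_nonneg (mul_nonneg ht0.le ht0.le) (mul_nonneg ht0.le ht0.le)) (sub_nonneg.2 hp1),
        sq_nonneg (t*t), mul_nonneg (mul_nonneg ht0.le ht0.le) ht0.le]
    have h4 : t^4 ≤ 0.6716^3*t := by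
      nlinarith [mul_nonneg (mul_nonneg ht0.le ht0.le) ht0.le, sq_nonneg t]
    nlinarith [pow_pos ht0 6, pow_pos ht0 4]
  nlinarith [mul_pos (mul_pos (mul_pos ht0 ht0) ht0) hH]

lemma polyB1 {p x : ℝ} (hp1 : 3.141592 ≤ p) (hp2 : p ≤ 3.141593) (hx0 : 0 < x) (hx : x ≤ 0.9) :
    0 < (1 - x^2/2 + x^4/24)*(2*(p^2-4*x^2)^2 - 16*(p^2-4*x^2) - 256*x^2)
        + 32*x*(p^2-4*x^2)*(x-x^3/6) := by
  have hq1 : (9.8696 : ℝ) ≤ p^2 := by nlinarith [sq_nonneg (p - 3.141592)]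
  have hq2 : p^2 ≤ (9.8696066 : ℝ) := by nlinarith [sq_nonneg (p - 3.141593)]
  set q := p^2 with hqdef
  have hg : (6.6296 : ℝ) ≤ q - 4*x^2 := by nlinarith
  have hc : (0.57 : ℝ) ≤ 1 - x^2/2 + x^4/24 := by nlinarith [sq_nonneg (x*x), sq_nonneg x]
  nlinarith [mul_nonneg (sub_nonneg.2 hg) (sub_nonneg.2 hg), mul_pos hx0 hx0,
    mul_nonneg (mul_nonneg hx0.le hx0.le) (sub_nonneg.2 hg),
    mul_nonneg (sub_nonneg.2 hc) (mul_nonneg (sub_nonneg.2 hg) (sub_nonneg.2 hg)),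
    sq_nonneg (x*x), mul_nonneg (mul_nonneg hx0.le hx0.le) (mul_nonneg hx0.le hx0.le),
    mul_nonneg (mul_nonneg (mul_nonneg hx0.le hx0.le) hx0.le) hx0.le]

/-! ### The two key trigonometric inequalities -/

lemma pi1 : (3.141592:ℝ) ≤ Real.pi := Real.pi_gt_d6.le
lemma pi2 : Real.pi ≤ (3.141593:ℝ) := Real.pi_lt_d6.le

lemma lemA {x : ℝ} (hx0 : 0 < x) (hx2 : x < Real.pi/2) :
    8*x*Real.cos x < Real.sin x * (Real.pi ^ 2 - 4*x^2) := by
  have hp1 := pi1; have hp2 := pi2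
  have hg : 0 < Real.pi ^ 2 - 4*x^2 := by nlinarith
  rcases le_or_gt x 0.9 with hle | hgt
  · have h1 := my_sin_lower hx0.le
    have h2 := my_cos_upper (x := x)
    have h3 := polyA1 hp1 hx0 (by linarith : x ≤ 0.95)
    nlinarith [mul_nonneg (sub_nonneg.2 h1) hg.le,
      mul_nonneg (by linarith : (0:ℝ) ≤ 8*x) (sub_nonneg.2 h2)]
  · obtain ⟨t, rfl⟩ : ∃ t, x = Real.pi/2 - t := ⟨Real.pi/2 - x, by ring⟩
    have ht0 : 0 < t := by linarith
    have ht : t ≤ 0.6716 := by linarith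
    rw [Real.cos_pi_div_two_sub, Real.sin_pi_div_two_sub]
    have h1 := my_sin_upper ht0.le
    have h2 := Real.one_sub_sq_div_two_le_cos (x := t)
    have h3 := polyA2 hp1 hp2 ht0 ht
    have k1 : (4*Real.pi - 8*t) * Real.sin t ≤ (4*Real.pi - 8*t) * (t - t^3/6 + t^5/120) :=
      mul_le_mul_of_nonneg_left h1 (by linarith)
    have k2 : (1 - t^2/2) * (4*t*(Real.pi - t)) ≤ Real.cos t * (4*t*(Real.pi - t)) :=
      mul_le_mul_of_nonneg_right h2 (by nlinarith)
    have k3 : (4*t) * ((Real.pi - 2*t)*(1 - t^2/6 + t^4/120)) < (4*t) * ((1 - t^2/2)*(Real.pi - t)) :=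
      mul_lt_mul_of_pos_left h3 (by linarith)
    nlinarith [k1, k2, k3]

lemma lemB {x : ℝ} (hx0 : 0 < x) (hx2 : x < Real.pi/2) :
    0 < Real.cos x * (2*(Real.pi ^ 2 - 4*x^2)^2 - 16*(Real.pi ^ 2 - 4*x^2) - 256*x^2)
        + 32*x*(Real.pi ^ 2 - 4*x^2)*Real.sin x := by
  have hp1 := pi1; have hp2 := pi2
  have hg : 0 < Real.pi ^ 2 - 4*x^2 := by nlinarith
  have hcos : 0 < Real.cos x := Real.cos_pos_of_mem_Ioo ⟨by linarith [Real.pi_pos], hx2⟩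
  have hsin : 0 < Real.sin x := Real.sin_pos_of_pos_of_lt_pi hx0 (by linarith [Real.pi_pos])
  rcases le_or_gt x 0.9 with hle | hgt
  · rcases le_or_gt (2*(Real.pi ^ 2 - 4*x^2)^2 - 16*(Real.pi ^ 2 - 4*x^2) - 256*x^2) 0 with hc | hc
    · have h1 := my_sin_lower hx0.le
      have h2 := my_cos_upper (x := x)
      have h3 := polyB1 hp1 hp2 hx0 hle
      nlinarith [mul_nonneg (sub_nonneg.2 h2) (neg_nonneg.2 hc),
        mul_nonneg (mul_nonneg (by linarith : (0:ℝ) ≤ 32*x) hg.le) (sub_nonneg.2 h1)]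
    · nlinarith [mul_pos hcos hc, mul_pos (mul_pos (by linarith : (0:ℝ) < 32*x) hg) hsin]
  · obtain ⟨t, rfl⟩ : ∃ t, x = Real.pi/2 - t := ⟨Real.pi/2 - x, by ring⟩
    have ht0 : 0 < t := by linarith
    have ht : t ≤ 0.6716 := by linarith
    rw [Real.cos_pi_div_two_sub, Real.sin_pi_div_two_sub]
    have h1 := my_sin_upper ht0.le
    have h2 := Real.one_sub_sq_div_two_le_cos (x := t)
    have h3 := polyB2 hp1 hp2 ht0 ht
    have h4 := polycoef hp1 hp2 ht0 ht
    have k1 : (32*t^2*(Real.pi-t)^2 - 64*t*(Real.pi-t) - 64*(Real.pi-2*t)^2) * (t - t^3/6 + t^5/120)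
        ≤ (32*t^2*(Real.pi-t)^2 - 64*t*(Real.pi-t) - 64*(Real.pi-2*t)^2) * Real.sin t := by
      rw [mul_comm _ (t - t^3/6 + t^5/120), mul_comm _ (Real.sin t)]
      exact mul_le_mul_of_nonpos_right h1 h4.le
    have k2 : (64*t*(Real.pi-2*t)*(Real.pi-t)) * (1 - t^2/2)
        ≤ (64*t*(Real.pi-2*t)*(Real.pi-t)) * Real.cos t := by
      apply mul_le_mul_of_nonneg_left h2
      have hp2t : (0:ℝ) < Real.pi - 2*t := by linarith
      have hpt : (0:ℝ) < Real.pi - t := by linarith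
      nlinarith [mul_pos (mul_pos ht0 hp2t) hpt]
    nlinarith [k1, k2, h3]

/-! ### Calculus layer -/

noncomputable def fK (x : ℝ) : ℝ := 2 * Real.cos x / (Real.pi ^ 2 - 4 * x ^ 2)

noncomputable def fK1 (x : ℝ) : ℝ :=
  (16*x*Real.cos x - 2*Real.sin x*(Real.pi ^ 2 - 4*x^2)) / (Real.pi ^ 2 - 4*x^2)^2

noncomputable def EE (x : ℝ) : ℝ :=
  -2*Real.cos x*(Real.pi ^ 2 - 4*x^2)^2 + 16*Real.cos x*(Real.pi ^ 2 - 4*x^2)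
    + 256*x^2*Real.cos x - 32*x*(Real.pi ^ 2 - 4*x^2)*Real.sin x

lemma hasDerivAt_g (x : ℝ) : HasDerivAt (fun y : ℝ => Real.pi ^ 2 - 4*y^2) (-(8*x)) x := by
  have h := ((hasDerivAt_pow 2 x).const_mul 4).const_sub (Real.pi ^ 2)
  refine h.congr_deriv ?_
  push_cast; ring

lemma hasDerivAt_fK {x : ℝ} (hg : Real.pi ^ 2 - 4*x^2 ≠ 0) : HasDerivAt fK (fK1 x) x := by
  have h1 : HasDerivAt (fun y => 2 * Real.cos y) (2 * (-Real.sin x)) x :=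
    (Real.hasDerivAt_cos x).const_mul 2
  have h := h1.div (hasDerivAt_g x) hg
  refine h.congr_deriv ?_
  unfold fK1
  field_simp
  ring

lemma hasDerivAt_fK1 {x : ℝ} (hg : Real.pi ^ 2 - 4*x^2 ≠ 0) :
    HasDerivAt fK1 (EE x / (Real.pi ^ 2 - 4*x^2)^3) x := by
  have hnum : HasDerivAt (fun y => 16*y*Real.cos y - 2*Real.sin y*(Real.pi ^ 2 - 4*y^2))
      ((16*Real.cos x + 16*x*(-Real.sin x)) -
        ((2*Real.cos x)*(Real.pi ^ 2 - 4*x^2) + (2*Real.sin x)*(-(8*x)))) x := by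
    have ha : HasDerivAt (fun y : ℝ => 16*y*Real.cos y) (16*Real.cos x + 16*x*(-Real.sin x)) x := by
      have := ((hasDerivAt_id x).const_mul 16).mul (Real.hasDerivAt_cos x)
      simp only [id_eq] at this
      refine this.congr_deriv ?_
      all_goals ring
    have hb : HasDerivAt (fun y => 2*Real.sin y*(Real.pi ^ 2 - 4*y^2))
        ((2*Real.cos x)*(Real.pi ^ 2 - 4*x^2) + (2*Real.sin x)*(-(8*x))) x := by
      have := ((Real.hasDerivAt_sin x).const_mul 2).mul (hasDerivAt_g x)
      refine this.congr_deriv ?_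
      all_goals ring
    exact ha.sub hb
  have hden : HasDerivAt (fun y : ℝ => (Real.pi ^ 2 - 4*y^2)^2)
      (2*(Real.pi ^ 2 - 4*x^2)*(-(8*x))) x := by
    have := (hasDerivAt_g x).pow 2
    refine this.congr_deriv ?_
    push_cast; ring
  have h := hnum.div hden (pow_ne_zero 2 hg)
  refine h.congr_deriv ?_
  unfold EE
  field_simp
  ring

lemma gpos {x : ℝ} (hx : x ∈ Set.Ioo (0:ℝ) (Real.pi/2)) : 0 < Real.pi ^ 2 - 4*x^2 := by
  obtain ⟨h0, h2⟩ := hx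
  nlinarith [Real.pi_pos]

lemma KkerEq : Set.EqOn Kker fK (Set.Ioo (0:ℝ) (Real.pi/2)) := by
  intro y hy
  obtain ⟨h0, h2⟩ := hy
  have hpi := Real.pi_pos
  unfold Kker fK
  rw [if_neg]
  push_neg
  constructor <;> intro h <;> linarith [h.symm.le]

lemma derivKker {x : ℝ} (hx : x ∈ Set.Ioo (0:ℝ) (Real.pi/2)) : deriv Kker x = fK1 x := by
  have hev : Kker =ᶠ[nhds x] fK := eventuallyEq_of_mem (isOpen_Ioo.mem_nhds hx) KkerEq
  rw [hev.deriv_eq, (hasDerivAt_fK (gpos hx).ne').deriv]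

lemma derivKker2 {x : ℝ} (hx : x ∈ Set.Ioo (0:ℝ) (Real.pi/2)) :
    deriv (deriv Kker) x = EE x / (Real.pi ^ 2 - 4*x^2)^3 := by
  have hev : deriv Kker =ᶠ[nhds x] fK1 :=
    eventuallyEq_of_mem (isOpen_Ioo.mem_nhds hx) (fun y hy => derivKker hy)
  rw [hev.deriv_eq, (hasDerivAt_fK1 (gpos hx).ne').deriv]

lemma fK1neg {x : ℝ} (hx : x ∈ Set.Ioo (0:ℝ) (Real.pi/2)) : fK1 x < 0 := by
  obtain ⟨h0, h2⟩ := hx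
  have hA := lemA h0 h2
  have hg := gpos ⟨h0, h2⟩
  apply div_neg_of_neg_of_pos _ (pow_pos hg 2)
  linarith

lemma EEneg {x : ℝ} (hx : x ∈ Set.Ioo (0:ℝ) (Real.pi/2)) : EE x < 0 := by
  obtain ⟨h0, h2⟩ := hx
  have hB := lemB h0 h2
  unfold EE
  nlinarith [hB]

lemma fKpos {x : ℝ} (hx : x ∈ Set.Ioo (0:ℝ) (Real.pi/2)) : 0 < fK x := by
  obtain ⟨h0, h2⟩ := hx
  have hcos : 0 < Real.cos x := Real.cos_pos_of_mem_Ioo ⟨by linarith [Real.pi_pos], h2⟩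
  exact div_pos (by linarith) (gpos ⟨h0, h2⟩)

end KernelAux

/-- **Lemma 3.2 of the paper**: on `(0, π/2)` one has `K' < 0` and
`K'' < 0`; in particular both `K` and `K'/K` are decreasing there. -/
theorem kernel_concavity :
    (∀ x ∈ Set.Ioo (0:ℝ) (Real.pi / 2),
      deriv Kker x < 0 ∧ deriv (deriv Kker) x < 0) ∧
    StrictAntiOn Kker (Set.Ioo (0:ℝ) (Real.pi / 2)) ∧
    StrictAntiOn (fun x => deriv Kker x / Kker x) (Set.Ioo (0:ℝ) (Real.pi / 2)) := by
  classical
  refine ⟨?_, ?_, ?_⟩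
  · intro x hx
    constructor
    · rw [KernelAux.derivKker hx]
      exact KernelAux.fK1neg hx
    · rw [KernelAux.derivKker2 hx]
      exact div_neg_of_neg_of_pos (KernelAux.EEneg hx) (pow_pos (KernelAux.gpos hx) 3)
  · apply strictAntiOn_of_deriv_neg (convex_Ioo _ _)
    · apply ContinuousOn.congr _ KernelAux.KkerEq
      apply ContinuousOn.div (by fun_prop) (by fun_prop)
      exact fun y hy => (KernelAux.gpos hy).ne'
    · intro x hx
      rw [interior_Ioo] at hx
      rw [KernelAux.derivKker hx]
      exact KernelAux.fK1neg hx
  · apply strictAntiOn_of_deriv_neg (convex_Ioo _ _)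
    · apply ContinuousOn.congr (f := fun y => KernelAux.fK1 y / KernelAux.fK y)
      · apply ContinuousOn.div
        · apply ContinuousOn.div (by fun_prop) (by fun_prop)
          exact fun y hy => pow_ne_zero 2 (KernelAux.gpos hy).ne'
        · apply ContinuousOn.div (by fun_prop) (by fun_prop)
          exact fun y hy => (KernelAux.gpos hy).ne'
        · exact fun y hy => (KernelAux.fKpos hy).ne'
      · intro y hy
        simp only
        rw [KernelAux.derivKker hy, KernelAux.KkerEq hy]
    · intro x hx
      rw [interior_Ioo] at hx
      have hev : (fun y => deriv Kker y / Kker y) =ᶠ[nhds x]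
          (fun y => KernelAux.fK1 y / KernelAux.fK y) := by
        apply eventuallyEq_of_mem (isOpen_Ioo.mem_nhds hx)
        intro y hy
        simp only
        rw [KernelAux.derivKker hy, KernelAux.KkerEq hy]
      rw [hev.deriv_eq]
      have hg := (KernelAux.gpos hx).ne'
      have hd := (KernelAux.hasDerivAt_fK1 hg).div (KernelAux.hasDerivAt_fK hg)
        (KernelAux.fKpos hx).ne'
      rw [show (fun y => KernelAux.fK1 y / KernelAux.fK y) = KernelAux.fK1 / KernelAux.fK from rfl, hd.deriv]
      apply div_neg_of_neg_of_pos
      · have h1 : KernelAux.EE x / (Real.pi ^ 2 - 4*x^2)^3 * KernelAux.fK x < 0 :=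
          mul_neg_of_neg_of_pos
            (div_neg_of_neg_of_pos (KernelAux.EEneg hx) (pow_pos (KernelAux.gpos hx) 3))
            (KernelAux.fKpos hx)
        have h2 : 0 < KernelAux.fK1 x * KernelAux.fK1 x :=
          mul_pos_of_neg_of_neg (KernelAux.fK1neg hx) (KernelAux.fK1neg hx)
        linarith
      · exact pow_pos (KernelAux.fKpos hx) 2
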